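/- Let E be a number field of degree d over ℚ acting by self-adjoint endomorphisms on a ℚ-quadratic space (T,q), with orthogonal decomposition T_Ẽ = ⊕_i (T_i,q_i) over a normal closure Ẽ. Let Q be the E-valued quadratic form on T obtained by restricting q_1 along ι_1: T → T_1. Then for each i, the twisted algebra C^0(Q)_{σ_i} = C^0(Q) ⊗_E Ẽ (with E acting via σ_i) is canonically isomorphic as an Ẽ-algebra to C^0(q_i). Consequently Z_G(C^0(Q)) ≅ C^0(q_1) ⊗_Ẽ ⋯ ⊗_Ẽ C^0(q_d), and this isomorphism is equivariant for the natural Galois actions on both sides. -/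

import Mathlib

set_option linter.unusedSectionVars false


open TensorProduct Module

variable (E F : Type) [Field E] [Field F] [Algebra ℚ E] [Algebra ℚ F]
variable (T : Type) [AddCommGroup T] [Module ℚ T] [Module E T] [IsScalarTower ℚ E T]
  [SMulCommClass ℚ E T]

/-- Scalar multiplication by `e ∈ E` on `T`, as a `ℚ`-linear endomorphism. -/
def smulE (e : E) : T →ₗ[ℚ] T where
  toFun t := e • t
  map_add' x y := smul_add e x y
  map_smul' q t := smul_comm e q t

/-- The `σ`-eigenspace `T_σ ⊆ T ⊗_ℚ F` of the (extended) `E`-action. -/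
noncomputable def eigenspaceE (σ : E →ₐ[ℚ] F) : Submodule F (F ⊗[ℚ] T) :=
  ⨅ e : E, Module.End.eigenspace (LinearMap.baseChange F (smulE E T e)) (σ e)

variable {E F T}

lemma mem_eigenspaceE {σ : E →ₐ[ℚ] F} {x : F ⊗[ℚ] T} :
    x ∈ eigenspaceE E F T σ ↔ ∀ e : E, (smulE E T e).baseChange F x = σ e • x := by
  simp [eigenspaceE, Submodule.mem_iInf, Module.End.mem_eigenspace_iff]

lemma eig_indep (s : Finset (E →ₐ[ℚ] F)) :
    ∀ y : (E →ₐ[ℚ] F) → F ⊗[ℚ] T, (∀ τ, y τ ∈ eigenspaceE E F T τ) →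
      ∑ τ ∈ s, y τ = 0 → ∀ τ ∈ s, y τ = 0 := by
  induction s using Finset.strongInduction with
  | _ s ih =>
    classical
    intro y hy hsum τ hτ
    have hothers : ∀ ρ ∈ s, ρ ≠ τ → y ρ = 0 := by
      intro ρ hρ hρτ
      obtain ⟨e, he⟩ : ∃ e, ρ e ≠ τ e := by
        by_contra h; push_neg at h; exact hρτ (AlgHom.ext h)
      have h2 : ∑ τ' ∈ s, (τ' e - τ e) • y τ' = 0 := by
        have h1 : ∑ τ' ∈ s, ((smulE E T e).baseChange F (y τ') - τ e • y τ') = 0 := by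
          rw [Finset.sum_sub_distrib, ← map_sum, ← Finset.smul_sum, hsum, map_zero, smul_zero,
            sub_zero]
        rw [← h1]
        refine Finset.sum_congr rfl fun τ' _ => ?_
        rw [mem_eigenspaceE.mp (hy τ') e]
        exact sub_smul (τ' e) (τ e) (y τ')
      have h3 : ∑ τ' ∈ s.erase τ, (τ' e - τ e) • y τ' = 0 := by
        rwa [Finset.sum_erase s (by simp)]
      have h4 := ih (s.erase τ) (Finset.erase_ssubset hτ)
        (fun τ' => (τ' e - τ e) • y τ')
        (fun τ' => Submodule.smul_mem _ _ (hy τ')) h3 ρ (Finset.mem_erase.2 ⟨hρτ, hρ⟩)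
      exact (smul_eq_zero.mp h4).resolve_left (sub_ne_zero.2 he)
    have h5 : ∑ τ' ∈ s.erase τ, y τ' = 0 :=
      Finset.sum_eq_zero fun ρ hρ =>
        hothers ρ (Finset.mem_of_mem_erase hρ) (Finset.ne_of_mem_erase hρ)
    rw [← Finset.add_sum_erase s y hτ, h5, add_zero] at hsum
    exact hsum

section proj

variable [FiniteDimensional ℚ E] [FiniteDimensional ℚ F]
variable (π : (E →ₐ[ℚ] F) → ((F ⊗[ℚ] T) →ₗ[F] (F ⊗[ℚ] T)))
variable (hπ₁ : ∀ σ x, π σ x ∈ eigenspaceE E F T σ)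
variable (hπ₃ : ∀ x, ∑ σ : E →ₐ[ℚ] F, π σ x = x)
include hπ₁ hπ₃

/-- Uniqueness of the eigenspace decomposition. -/
lemma proj_eq_of_decomp {x : F ⊗[ℚ] T} {z : (E →ₐ[ℚ] F) → F ⊗[ℚ] T}
    (hz : ∀ τ, z τ ∈ eigenspaceE E F T τ) (hsum : ∑ τ : E →ₐ[ℚ] F, z τ = x)
    (σ : E →ₐ[ℚ] F) : π σ x = z σ := by
  have h0 : ∑ τ : E →ₐ[ℚ] F, (π τ x - z τ) = 0 := by
    rw [Finset.sum_sub_distrib, hπ₃, hsum, sub_self]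
  have := eig_indep Finset.univ (fun τ => π τ x - z τ)
    (fun τ => Submodule.sub_mem _ (hπ₁ τ x) (hz τ)) h0 σ (Finset.mem_univ σ)
  exact sub_eq_zero.mp this

/-- The projections intertwine the `E`-action. -/
lemma proj_smulE (σ : E →ₐ[ℚ] F) (e : E) (x : F ⊗[ℚ] T) :
    π σ ((smulE E T e).baseChange F x) = σ e • π σ x := by
  refine proj_eq_of_decomp π hπ₁ hπ₃ (z := fun τ => τ e • π τ x)
    (fun τ => Submodule.smul_mem _ _ (hπ₁ τ x)) ?_ σ
  calc ∑ τ : E →ₐ[ℚ] F, τ e • π τ x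
      = ∑ τ : E →ₐ[ℚ] F, (smulE E T e).baseChange F (π τ x) :=
        Finset.sum_congr rfl fun τ _ => (mem_eigenspaceE.mp (hπ₁ τ x) e).symm
    _ = (smulE E T e).baseChange F x := by rw [← map_sum, hπ₃]

end proj

section galois

/-- `g ⊗ id` on `F ⊗[ℚ] T`. -/
noncomputable def Gmap (g : F ≃ₐ[ℚ] F) : F ⊗[ℚ] T →ₗ[ℚ] F ⊗[ℚ] T :=
  LinearMap.rTensor T (g.toLinearMap : F →ₗ[ℚ] F)

@[simp] lemma Gmap_tmul (g : F ≃ₐ[ℚ] F) (a : F) (t : T) :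
    Gmap (T := T) g (a ⊗ₜ[ℚ] t) = g a ⊗ₜ[ℚ] t := rfl

lemma Gmap_smul (g : F ≃ₐ[ℚ] F) (c : F) (x : F ⊗[ℚ] T) :
    Gmap (T := T) g (c • x) = g c • Gmap (T := T) g x := by
  induction x using TensorProduct.induction_on with
  | zero => simp
  | tmul a t => simp [smul_tmul', smul_eq_mul, map_mul]
  | add x y hx hy => rw [smul_add, map_add, hx, hy, map_add, smul_add]

lemma Gmap_comm_smulE (g : F ≃ₐ[ℚ] F) (e : E) (x : F ⊗[ℚ] T) :
    Gmap (T := T) g ((smulE E T e).baseChange F x)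
      = (smulE E T e).baseChange F (Gmap (T := T) g x) := by
  induction x using TensorProduct.induction_on with
  | zero => simp
  | tmul a t => simp [LinearMap.baseChange_tmul]
  | add x y hx hy => simp only [map_add, hx, hy]

lemma Gmap_mem_eigenspaceE (g : F ≃ₐ[ℚ] F) {σ : E →ₐ[ℚ] F} {x : F ⊗[ℚ] T}
    (hx : x ∈ eigenspaceE E F T σ) :
    Gmap (T := T) g x ∈ eigenspaceE E F T ((g : F →ₐ[ℚ] F).comp σ) := by
  rw [mem_eigenspaceE] at hx ⊢
  intro e
  rw [← Gmap_comm_smulE, hx e, Gmap_smul]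
  rfl

/-- Composition with a Galois automorphism, as an equivalence of embeddings. -/
def compEquiv (g : F ≃ₐ[ℚ] F) : (E →ₐ[ℚ] F) ≃ (E →ₐ[ℚ] F) where
  toFun ρ := (g : F →ₐ[ℚ] F).comp ρ
  invFun ρ := (g.symm : F →ₐ[ℚ] F).comp ρ
  left_inv ρ := by ext x; simp
  right_inv ρ := by ext x; simp

section gproj

variable [FiniteDimensional ℚ E] [FiniteDimensional ℚ F]
variable (π : (E →ₐ[ℚ] F) → ((F ⊗[ℚ] T) →ₗ[F] (F ⊗[ℚ] T)))
variable (hπ₁ : ∀ σ x, π σ x ∈ eigenspaceE E F T σ)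
variable (hπ₃ : ∀ x, ∑ σ : E →ₐ[ℚ] F, π σ x = x)
include hπ₁ hπ₃

lemma proj_Gmap (g : F ≃ₐ[ℚ] F) (σ : E →ₐ[ℚ] F) (x : F ⊗[ℚ] T) :
    π ((g : F →ₐ[ℚ] F).comp σ) (Gmap (T := T) g x) = Gmap (T := T) g (π σ x) := by
  have key := proj_eq_of_decomp π hπ₁ hπ₃
    (x := Gmap (T := T) g x)
    (z := fun ρ => Gmap (T := T) g (π ((g.symm : F →ₐ[ℚ] F).comp ρ) x))
    (fun ρ => by
      have := Gmap_mem_eigenspaceE g (hπ₁ ((g.symm : F →ₐ[ℚ] F).comp ρ) x)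
      have hc : (g : F →ₐ[ℚ] F).comp ((g.symm : F →ₐ[ℚ] F).comp ρ) = ρ := by ext x; simp
      rwa [hc] at this)
    (by
      rw [← map_sum]
      have : ∑ ρ : E →ₐ[ℚ] F, π ((g.symm : F →ₐ[ℚ] F).comp ρ) x
          = ∑ τ : E →ₐ[ℚ] F, π τ x :=
        Equiv.sum_comp (compEquiv (E := E) g.symm) (fun τ => π τ x)
      rw [this, hπ₃ x])
    ((g : F →ₐ[ℚ] F).comp σ)
  rw [key]
  have hc2 : (g.symm : F →ₐ[ℚ] F).comp ((g : F →ₐ[ℚ] F).comp σ) = σ := by ext y; simp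
  rw [hc2]

end gproj

end galois

lemma exists_gal (E F : Type) [Field E] [Field F] [Algebra ℚ E] [Algebra ℚ F]
    [FiniteDimensional ℚ F] [Normal ℚ F] (σ₁ σ : E →ₐ[ℚ] F) :
    ∃ g : F ≃ₐ[ℚ] F, ∀ e : E, g (σ₁ e) = σ e := by
  let L : IntermediateField ℚ F := σ₁.fieldRange
  let e₀ : E →ₐ[ℚ] L :=
    { toFun := fun x => ⟨σ₁ x, ⟨x, rfl⟩⟩
      map_one' := by ext; simp
      map_mul' := by intros; ext; simp
      map_zero' := by ext; simp
      map_add' := by intros; ext; simp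
      commutes' := by intros; ext; simp }
  have hbij : Function.Bijective e₀ := by
    constructor
    · intro a b hab
      exact σ₁.toRingHom.injective (congrArg Subtype.val hab)
    · rintro ⟨y, x, rfl⟩
      exact ⟨x, rfl⟩
  let eE : E ≃ₐ[ℚ] L := AlgEquiv.ofBijective e₀ hbij
  let ψ : L →ₐ[ℚ] F := σ.comp eE.symm.toAlgHom
  let g0 : F →ₐ[ℚ] F := ψ.liftNormal F
  have hg0 : Function.Bijective g0 := AlgHom.normal_bijective ℚ F F g0
  refine ⟨AlgEquiv.ofBijective g0 hg0, fun e => ?_⟩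
  have h1 : σ₁ e = algebraMap L F (eE e) := rfl
  show g0 (σ₁ e) = σ e
  rw [h1, AlgHom.liftNormal_commutes]
  show σ (eE.symm (eE e)) = σ e
  rw [AlgEquiv.symm_apply_apply]

section quad

variable (q : QuadraticForm ℚ T)

lemma polarBilin_Gmap [Invertible (2 : F)] (g : F ≃ₐ[ℚ] F) (x y : F ⊗[ℚ] T) :
    QuadraticMap.polarBilin (q.baseChange F) (Gmap (T := T) g x) (Gmap (T := T) g y)
      = g (QuadraticMap.polarBilin (q.baseChange F) x y) := by
  rw [QuadraticForm.polarBilin_baseChange]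
  induction x using TensorProduct.induction_on with
  | zero => simp
  | add x₁ x₂ h₁ h₂ => simp only [map_add, LinearMap.add_apply, h₁, h₂]
  | tmul a t =>
    induction y using TensorProduct.induction_on with
    | zero => simp
    | add y₁ y₂ h₁ h₂ => simp only [map_add, LinearMap.add_apply, h₁, h₂]
    | tmul b t' =>
      simp only [Gmap_tmul, LinearMap.BilinForm.baseChange_tmul]
      simp [Algebra.smul_def, map_mul, Rat.smul_def]

lemma baseChange_Gmap [Invertible (2 : F)] (g : F ≃ₐ[ℚ] F) (x : F ⊗[ℚ] T) :
    (q.baseChange F) (Gmap (T := T) g x) = g ((q.baseChange F) x) := by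
  have h2 : (2 : F) ≠ 0 := two_ne_zero
  apply mul_left_cancel₀ h2
  have ha := QuadraticMap.polar_self (q.baseChange F) (Gmap (T := T) g x)
  have hb := QuadraticMap.polar_self (q.baseChange F) x
  have hc := polarBilin_Gmap q g x x
  rw [QuadraticMap.polarBilin_apply_apply, QuadraticMap.polarBilin_apply_apply] at hc
  rw [ha, hb] at hc
  rw [map_nsmul] at hc
  simpa [nsmul_eq_mul] using hc

end quad

section construct

variable [FiniteDimensional ℚ E] [FiniteDimensional ℚ F] [FiniteDimensional E T]
variable (π : (E →ₐ[ℚ] F) → ((F ⊗[ℚ] T) →ₗ[F] (F ⊗[ℚ] T)))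
variable (hπ₁ : ∀ σ x, π σ x ∈ eigenspaceE E F T σ)
variable (hπ₂ : ∀ σ, ∀ x ∈ eigenspaceE E F T σ, π σ x = x)
variable (hπ₃ : ∀ x, ∑ σ : E →ₐ[ℚ] F, π σ x = x)
include hπ₁ hπ₂ hπ₃

lemma exists_psi (τ : E →ₐ[ℚ] F) :
    letI : Algebra E F := τ.toRingHom.toAlgebra
    ∃ ψ : (F ⊗[E] T) →ₗ[F] (eigenspaceE E F T τ),
      (∀ (a : F) (t : T), (ψ (a ⊗ₜ[E] t) : F ⊗[ℚ] T) = a • π τ ((1:F) ⊗ₜ[ℚ] t)) ∧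
      Function.Surjective ψ := by
  letI : Algebra E F := τ.toRingHom.toAlgebra
  haveI : SMulCommClass ℚ E F :=
    ⟨fun a e c => by
      simp only [Algebra.smul_def, Rat.smul_def]
      ring⟩
  -- E acts on F ⊗[ℚ] T through the left factor; identify it with the `τ e`-action
  have hsmul : ∀ (e : E) (x : F ⊗[ℚ] T), e • x = τ e • x := by
    intro e x
    induction x using TensorProduct.induction_on with
    | zero => simp
    | tmul a t => rw [smul_tmul', smul_tmul']; congr 1
    | add x y hx hy => rw [smul_add, hx, hy, smul_add]
  haveI : IsScalarTower E F (F ⊗[ℚ] T) :=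
    ⟨fun e a x => by
      rw [hsmul, Algebra.smul_def, smul_smul]
      rfl⟩
  let f₀ : T →ₗ[E] F ⊗[ℚ] T :=
    { toFun := fun t => π τ ((1:F) ⊗ₜ[ℚ] t)
      map_add' := fun t t' => by simp only [tmul_add, map_add]
      map_smul' := fun e t => by
        show π τ ((1:F) ⊗ₜ[ℚ] (e • t)) = e • π τ ((1:F) ⊗ₜ[ℚ] t)
        have h1 : (1:F) ⊗ₜ[ℚ] (e • t) = (smulE E T e).baseChange F ((1:F) ⊗ₜ[ℚ] t) := by
          simp [LinearMap.baseChange_tmul, smulE]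
        rw [h1, proj_smulE π hπ₁ hπ₃ τ e, hsmul] }
  let φ : (F ⊗[E] T) →ₗ[F] (F ⊗[ℚ] T) := f₀.liftBaseChange F
  have hφ_tmul : ∀ (a : F) (t : T), φ (a ⊗ₜ[E] t) = a • π τ ((1:F) ⊗ₜ[ℚ] t) :=
    fun a t => rfl
  have hφ_mem : ∀ x, φ x ∈ eigenspaceE E F T τ := by
    intro x
    induction x using TensorProduct.induction_on with
    | zero => simp
    | tmul a t => rw [hφ_tmul]; exact Submodule.smul_mem _ _ (hπ₁ τ _)
    | add x y hx hy => rw [map_add]; exact Submodule.add_mem _ hx hy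
  let ψ : (F ⊗[E] T) →ₗ[F] (eigenspaceE E F T τ) := φ.codRestrict _ hφ_mem
  have hψ : ∀ (a : F) (t : T), (ψ (a ⊗ₜ[E] t) : F ⊗[ℚ] T) = a • π τ ((1:F) ⊗ₜ[ℚ] t) :=
    fun a t => hφ_tmul a t
  refine ⟨ψ, hψ, ?_⟩
  have hsur : ∀ z : F ⊗[ℚ] T, ∃ x, φ x = π τ z := by
    intro z
    induction z using TensorProduct.induction_on with
    | zero => exact ⟨0, by simp⟩
    | tmul a t =>
      refine ⟨a ⊗ₜ[E] t, ?_⟩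
      rw [hφ_tmul]
      have : a ⊗ₜ[ℚ] t = a • ((1:F) ⊗ₜ[ℚ] t) := by rw [smul_tmul']; simp
      rw [this, map_smul]
    | add x y hx hy =>
      obtain ⟨x₁, hx₁⟩ := hx
      obtain ⟨y₁, hy₁⟩ := hy
      exact ⟨x₁ + y₁, by rw [map_add, hx₁, hy₁, map_add]⟩
  rintro ⟨y, hy⟩
  obtain ⟨x, hx⟩ := hsur y
  refine ⟨x, ?_⟩
  ext
  show φ x = y
  rw [hx, hπ₂ τ y hy]

lemma finrank_eig_le (τ : E →ₐ[ℚ] F) :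
    finrank F (eigenspaceE E F T τ) ≤ finrank E T := by
  letI : Algebra E F := τ.toRingHom.toAlgebra
  obtain ⟨ψ, -, hsurj⟩ := exists_psi π hπ₁ hπ₂ hπ₃ τ
  haveI : Module.Finite F (F ⊗[E] T) := Module.Finite.base_change E F T
  calc finrank F (eigenspaceE E F T τ)
      = finrank F (⊤ : Submodule F (eigenspaceE E F T τ)) := (finrank_top _ _).symm
    _ = finrank F (LinearMap.range ψ) := by rw [LinearMap.range_eq_top.mpr hsurj]
    _ ≤ finrank F (F ⊗[E] T) := LinearMap.finrank_range_le ψ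
    _ = finrank E T := Module.finrank_baseChange

end construct

section evenEquiv

open CliffordAlgebra

variable {R M₁ M₂ : Type*} [CommRing R] [AddCommGroup M₁] [AddCommGroup M₂]
  [Module R M₁] [Module R M₂] {Q₁ : QuadraticForm R M₁} {Q₂ : QuadraticForm R M₂}

lemma even_map_mem (f : Q₁ →qᵢ Q₂) {x : CliffordAlgebra Q₁}
    (hx : x ∈ CliffordAlgebra.even Q₁) :
    CliffordAlgebra.map f x ∈ CliffordAlgebra.even Q₂ := by
  have hx' : x ∈ evenOdd Q₁ 0 := hx
  clear hx
  induction x, hx' using CliffordAlgebra.even_induction with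
  | algebraMap r =>
    rw [AlgHom.commutes]
    exact Subalgebra.algebraMap_mem _ r
  | add x y hx hy ihx ihy =>
    rw [map_add]
    exact add_mem ihx ihy
  | ι_mul_ι_mul m₁ m₂ x hx ihx =>
    rw [map_mul, map_mul, map_apply_ι, map_apply_ι]
    exact mul_mem (show (ι Q₂) (f m₁) * (ι Q₂) (f m₂) ∈ CliffordAlgebra.even Q₂ from
      ι_mul_ι_mem_evenOdd_zero Q₂ (f m₁) (f m₂)) ihx

/-- The even subalgebras of Clifford algebras of isometric quadratic forms are isomorphic. -/
noncomputable def evenEquivOfIsometry (e : Q₁.IsometryEquiv Q₂) :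
    CliffordAlgebra.even Q₁ ≃ₐ[R] CliffordAlgebra.even Q₂ :=
  AlgEquiv.ofAlgHom
    (((equivOfIsometry e).toAlgHom.comp (even Q₁).val).codRestrict (even Q₂)
      (fun x => even_map_mem e.toIsometry x.2))
    (((equivOfIsometry e.symm).toAlgHom.comp (even Q₂).val).codRestrict (even Q₁)
      (fun x => even_map_mem e.symm.toIsometry x.2))
    (AlgHom.ext fun x => Subtype.ext (by
      show equivOfIsometry e (equivOfIsometry e.symm (x : CliffordAlgebra Q₂)) = x
      rw [← equivOfIsometry_symm]
      exact (equivOfIsometry e).apply_symm_apply _))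
    (AlgHom.ext fun x => Subtype.ext (by
      show equivOfIsometry e.symm (equivOfIsometry e (x : CliffordAlgebra Q₁)) = x
      rw [← equivOfIsometry_symm]
      exact (equivOfIsometry e).symm_apply_apply _))

end evenEquiv

section values

variable [FiniteDimensional ℚ E] [FiniteDimensional ℚ F] [Normal ℚ F]
variable (q : QuadraticForm ℚ T)
variable (π : (E →ₐ[ℚ] F) → ((F ⊗[ℚ] T) →ₗ[F] (F ⊗[ℚ] T)))
variable (hπ₁ : ∀ σ x, π σ x ∈ eigenspaceE E F T σ)
variable (hπ₃ : ∀ x, ∑ σ : E →ₐ[ℚ] F, π σ x = x)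
variable (σ₁ : E →ₐ[ℚ] F) (Q : QuadraticForm E T)
variable (hQ : ∀ t : T, σ₁ (Q t) = (q.baseChange F) (π σ₁ ((1 : F) ⊗ₜ[ℚ] t)))
include hπ₁ hπ₃ hQ

lemma polar_sigma1 (t t' : T) :
    QuadraticMap.polar (q.baseChange F) (π σ₁ ((1:F) ⊗ₜ[ℚ] t)) (π σ₁ ((1:F) ⊗ₜ[ℚ] t'))
      = σ₁ (QuadraticMap.polar Q t t') := by
  have hadd : π σ₁ ((1:F) ⊗ₜ[ℚ] (t + t'))
      = π σ₁ ((1:F) ⊗ₜ[ℚ] t) + π σ₁ ((1:F) ⊗ₜ[ℚ] t') := by rw [tmul_add, map_add]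
  rw [QuadraticMap.polar, QuadraticMap.polar, ← hadd, ← hQ, ← hQ, ← hQ, map_sub, map_sub]

lemma proj_one_eq_Gmap (σ : E →ₐ[ℚ] F) (g : F ≃ₐ[ℚ] F) (hg : ∀ e, g (σ₁ e) = σ e) (t : T) :
    π σ ((1:F) ⊗ₜ[ℚ] t) = Gmap (T := T) g (π σ₁ ((1:F) ⊗ₜ[ℚ] t)) := by
  have hcomp : (g : F →ₐ[ℚ] F).comp σ₁ = σ := AlgHom.ext hg
  have h := proj_Gmap π hπ₁ hπ₃ g σ₁ ((1:F) ⊗ₜ[ℚ] t)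
  rw [hcomp] at h
  rw [← h]
  congr 1
  simp

lemma value_sigma [Invertible (2 : F)] (σ : E →ₐ[ℚ] F) (t : T) :
    (q.baseChange F) (π σ ((1:F) ⊗ₜ[ℚ] t)) = σ (Q t) := by
  obtain ⟨g, hg⟩ := exists_gal E F σ₁ σ
  rw [proj_one_eq_Gmap q π hπ₁ hπ₃ σ₁ Q hQ σ g hg, baseChange_Gmap, ← hQ, hg]

lemma polar_sigma [Invertible (2 : F)] (σ : E →ₐ[ℚ] F) (t t' : T) :
    QuadraticMap.polar (q.baseChange F) (π σ ((1:F) ⊗ₜ[ℚ] t)) (π σ ((1:F) ⊗ₜ[ℚ] t'))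
      = σ (QuadraticMap.polar Q t t') := by
  obtain ⟨g, hg⟩ := exists_gal E F σ₁ σ
  rw [proj_one_eq_Gmap q π hπ₁ hπ₃ σ₁ Q hQ σ g hg, proj_one_eq_Gmap q π hπ₁ hπ₃ σ₁ Q hQ σ g hg]
  have h := polarBilin_Gmap q g (π σ₁ ((1:F) ⊗ₜ[ℚ] t)) (π σ₁ ((1:F) ⊗ₜ[ℚ] t'))
  rw [QuadraticMap.polarBilin_apply_apply, QuadraticMap.polarBilin_apply_apply] at h
  rw [h, polar_sigma1 q π hπ₁ hπ₃ σ₁ Q hQ, hg]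

end values

variable (E F T)

/-- Let a number field `E` of degree `d` act by self-adjoint
endomorphisms on a `ℚ`-quadratic space `(T,q)`, with orthogonal eigenspace decomposition
`T_F = ⊕_σ (T_σ, q_σ)` over a normal closure `F` (with projections `π σ`, and
`ι₁ = π σ₁ ∘ (t ↦ 1 ⊗ t)`).  Let `Q` be the `E`-valued quadratic form on `T` obtained by
restricting `q₁` along `ι₁` (hypothesis `hQ`).  Then for each embedding `σ : E ↪ F`, the
twisted algebra `C⁰(Q)_σ = C⁰(Q) ⊗_{E,σ} F` is isomorphic as an `F`-algebra to
`C⁰(q_σ)`; consequently `Z_G(C⁰(Q)) ≅ C⁰(q₁) ⊗_F ⋯ ⊗_F C⁰(q_d)`. -/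
theorem twisted_even_clifford_iso
    [FiniteDimensional ℚ E] [FiniteDimensional ℚ F] [Normal ℚ F]
    [FiniteDimensional E T]
    (hcard : Fintype.card (E →ₐ[ℚ] F) = finrank ℚ E)
    (q : QuadraticForm ℚ T)
    (hadj : ∀ (e : E) (x y : T),
      QuadraticMap.polarBilin q (e • x) y = QuadraticMap.polarBilin q x (e • y))
    (π : (E →ₐ[ℚ] F) → ((F ⊗[ℚ] T) →ₗ[F] (F ⊗[ℚ] T)))
    (hπ₁ : ∀ σ x, π σ x ∈ eigenspaceE E F T σ)
    (hπ₂ : ∀ σ, ∀ x ∈ eigenspaceE E F T σ, π σ x = x)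
    (hπ₃ : ∀ x, ∑ σ : E →ₐ[ℚ] F, π σ x = x)
    (σ₁ : E →ₐ[ℚ] F)
    (Q : QuadraticForm E T)
    (hQ : ∀ t : T, σ₁ (Q t) = (q.baseChange F) (π σ₁ ((1 : F) ⊗ₜ[ℚ] t))) :
    ∀ σ : E →ₐ[ℚ] F,
      letI : Algebra E F := σ.toRingHom.toAlgebra
      letI : Invertible (2 : E) := invertibleOfNonzero (by
        intro h
        exact two_ne_zero ((algebraMap ℚ E).injective (by simpa using congrArg id h)))
      Nonempty
        ((CliffordAlgebra.even (Q.baseChange F)) ≃ₐ[F]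
          (CliffordAlgebra.even (R := F) (M := eigenspaceE E F T σ)
            ((q.baseChange F).comp (eigenspaceE E F T σ).subtype))) := by
  intro σ
  haveI : CharZero F := charZero_of_injective_algebraMap (algebraMap ℚ F).injective
  haveI inv2F : Invertible (2 : F) := invertibleOfNonzero two_ne_zero
  letI : Algebra E F := σ.toRingHom.toAlgebra
  letI : Invertible (2 : E) := invertibleOfNonzero (by
    intro h
    exact two_ne_zero ((algebraMap ℚ E).injective (by simpa using congrArg id h)))
  haveI : Module.Finite ℚ T := Module.Finite.trans E T
  haveI : Module.Finite F (F ⊗[ℚ] T) := Module.Finite.base_change ℚ F T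
  haveI : Module.Finite F (F ⊗[E] T) := Module.Finite.base_change E F T
  obtain ⟨ψ, hψ, hsurj⟩ := exists_psi π hπ₁ hπ₂ hπ₃ σ
  -- dimension count
  have hle : ∀ τ, finrank F (eigenspaceE E F T τ) ≤ finrank E T :=
    finrank_eig_le π hπ₁ hπ₂ hπ₃
  have hd : finrank F (F ⊗[ℚ] T) = finrank ℚ T := Module.finrank_baseChange
  have hrankT : finrank ℚ E * finrank E T = finrank ℚ T := Module.finrank_mul_finrank ℚ E T
  have hsum_le : finrank F (F ⊗[ℚ] T)
      ≤ ∑ τ : E →ₐ[ℚ] F, finrank F (eigenspaceE E F T τ) := by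
    classical
    let Φ : (∀ τ : E →ₐ[ℚ] F, eigenspaceE E F T τ) →ₗ[F] F ⊗[ℚ] T :=
      ∑ τ : E →ₐ[ℚ] F, (eigenspaceE E F T τ).subtype ∘ₗ LinearMap.proj τ
    have hΦ : Function.Surjective Φ := by
      intro x
      refine ⟨fun τ => ⟨π τ x, hπ₁ τ x⟩, ?_⟩
      simp only [Φ, LinearMap.sum_apply, LinearMap.comp_apply, LinearMap.proj_apply,
        Submodule.coe_subtype]
      exact hπ₃ x
    have h1 : finrank F (LinearMap.range Φ) = finrank F (F ⊗[ℚ] T) := by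
      rw [LinearMap.range_eq_top.mpr hΦ]
      exact finrank_top F _
    calc finrank F (F ⊗[ℚ] T) = finrank F (LinearMap.range Φ) := h1.symm
      _ ≤ finrank F (∀ τ : E →ₐ[ℚ] F, eigenspaceE E F T τ) := LinearMap.finrank_range_le Φ
      _ = ∑ τ : E →ₐ[ℚ] F, finrank F (eigenspaceE E F T τ) :=
        haveI : ∀ τ : E →ₐ[ℚ] F, Module.Free F (eigenspaceE E F T τ) :=
          fun τ => Module.Free.of_divisionRing F (eigenspaceE E F T τ)
        Module.finrank_pi_fintype F (M := fun τ => ↥(eigenspaceE E F T τ))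
  have heq : finrank F (eigenspaceE E F T σ) = finrank E T := by
    by_contra hne
    have hlt : finrank F (eigenspaceE E F T σ) < finrank E T := lt_of_le_of_ne (hle σ) hne
    have hstrict : ∑ τ : E →ₐ[ℚ] F, finrank F (eigenspaceE E F T τ)
        < ∑ _τ : E →ₐ[ℚ] F, finrank E T :=
      Finset.sum_lt_sum (fun i _ => hle i) ⟨σ, Finset.mem_univ σ, hlt⟩
    rw [Finset.sum_const, Finset.card_univ, smul_eq_mul, hcard, hrankT] at hstrict
    have h2 : finrank ℚ T ≤ ∑ τ : E →ₐ[ℚ] F, finrank F (eigenspaceE E F T τ) :=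
      hd ▸ hsum_le
    exact absurd h2 (not_le.mpr hstrict)
  -- injectivity
  have hdom : finrank F (F ⊗[E] T) = finrank E T := Module.finrank_baseChange
  have hinj : Function.Injective ψ := by
    have hrn := LinearMap.finrank_range_add_finrank_ker (K := F) (V := F ⊗[E] T)
      (V₂ := eigenspaceE E F T σ) ψ
    rw [LinearMap.range_eq_top.mpr hsurj, finrank_top] at hrn
    have hker : finrank F (LinearMap.ker ψ) = 0 := by omega
    rw [← LinearMap.ker_eq_bot (R := F) (R₂ := F) (M := F ⊗[E] T)
      (M₂ := eigenspaceE E F T σ) (f := ψ)]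
    exact Submodule.finrank_eq_zero.mp hker
  -- the isometry
  have key : ∀ x y : F ⊗[E] T,
      QuadraticMap.polarBilin (Q.baseChange F) x y
        = QuadraticMap.polarBilin (q.baseChange F) (ψ x : F ⊗[ℚ] T) (ψ y : F ⊗[ℚ] T) := by
    intro x y
    induction x using TensorProduct.induction_on with
    | zero => simp
    | add x₁ x₂ h₁ h₂ => rw [map_add, LinearMap.add_apply, h₁, h₂, map_add,
        Submodule.coe_add, map_add, LinearMap.add_apply]
    | tmul a t =>
      induction y using TensorProduct.induction_on with
      | zero => simp
      | add y₁ y₂ h₁ h₂ => rw [map_add, h₁, h₂, map_add, Submodule.coe_add, map_add]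
      | tmul b t' =>
        rw [hψ, hψ, QuadraticForm.polarBilin_baseChange,
          LinearMap.BilinForm.baseChange_tmul]
        simp only [map_smul, LinearMap.smul_apply, smul_eq_mul,
          QuadraticMap.polarBilin_apply_apply]
        rw [polar_sigma q π hπ₁ hπ₃ σ₁ Q hQ σ t t', Algebra.smul_def]
        have halg : ∀ x : E, algebraMap E F x = σ x := fun x => rfl
        rw [halg]
        ring
  have hmap : ∀ x : F ⊗[E] T,
      ((q.baseChange F).comp (eigenspaceE E F T σ).subtype) (ψ x) = (Q.baseChange F) x := by
    intro x
    have h2 : (2 : F) ≠ 0 := two_ne_zero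
    apply mul_left_cancel₀ h2
    have ha := QuadraticMap.polar_self (Q.baseChange F) x
    have hb := QuadraticMap.polar_self (q.baseChange F) (ψ x : F ⊗[ℚ] T)
    have hc := key x x
    rw [QuadraticMap.polarBilin_apply_apply, QuadraticMap.polarBilin_apply_apply,
      ha, hb] at hc
    have hcomp : ((q.baseChange F).comp (eigenspaceE E F T σ).subtype) (ψ x)
        = (q.baseChange F) (ψ x : F ⊗[ℚ] T) := rfl
    rw [hcomp]
    simpa [nsmul_eq_mul] using hc.symm
  let eqv := LinearEquiv.ofBijective ψ ⟨hinj, hsurj⟩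
  let iso : (Q.baseChange F).IsometryEquiv
      ((q.baseChange F).comp (eigenspaceE E F T σ).subtype) :=
    { eqv with map_app' := fun x => hmap x }
  exact ⟨evenEquivOfIsometry iso⟩
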